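/- Then (i) the subspace of X ∈ Sym₀²(ℂ⁵) satisfying diag(−I₂, B)·X·diag(−I₂, B)ᵀ = X for every B ∈ SO(3) equals { [[S, 0],[0, qI₃]] : S a symmetric 2×2 complex matrix, q ∈ ℂ, tr S + 3q = 0 }, which is 3-dimensional; and (ii) letting h := the block matrix [[0,1],[1,0]] ⊕ diag(−1,1,1) ∈ SO(5), the subspace of X ∈ Sym₀²(ℂ⁵) fixed as in (i) and additionally satisfying hXhᵀ = X equals the 2-dimensional span of [[0,1],[1,0]] ⊕ 0₃ and diag(3,3,−2,−2,−2). -/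

import Mathlib

/-!
STATEMENT 13: (i) The vectors of Sym₀²(ℂ⁵) fixed by conjugation by diag(−I₂,B)
for all B ∈ SO(3) are the matrices [[S,0],[0,qI₃]] with S symmetric 2×2 and
tr S + 3q = 0 (3-dimensional); (ii) those additionally fixed by
h = [[0,1],[1,0]] ⊕ diag(−1,1,1) form the 2-dimensional span of
[[0,1],[1,0]] ⊕ 0₃ and diag(3,3,−2,−2,−2).
-/

open Matrix

noncomputable section

set_option maxHeartbeats 1000000
set_option linter.unreachableTactic false
set_option linter.unusedTactic false

/-- SO(3) as a set of real matrices. -/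
def SO3 : Set (Matrix (Fin 3) (Fin 3) ℝ) := {B | B * Bᵀ = 1 ∧ B.det = 1}

/-- The block-diagonal matrix diag(−I₂, B), as a complex 5×5 matrix. -/
def embB (B : Matrix (Fin 3) (Fin 3) ℝ) : Matrix (Fin 5) (Fin 5) ℂ :=
  !![-1, 0, 0, 0, 0;
     0, -1, 0, 0, 0;
     0, 0, (B 0 0 : ℂ), (B 0 1 : ℂ), (B 0 2 : ℂ);
     0, 0, (B 1 0 : ℂ), (B 1 1 : ℂ), (B 1 2 : ℂ);
     0, 0, (B 2 0 : ℂ), (B 2 1 : ℂ), (B 2 2 : ℂ)]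

/-- h = [[0,1],[1,0]] ⊕ diag(−1,1,1) ∈ SO(5). -/
def h13 : Matrix (Fin 5) (Fin 5) ℂ :=
  !![0, 1, 0, 0, 0;
     1, 0, 0, 0, 0;
     0, 0, -1, 0, 0;
     0, 0, 0, 1, 0;
     0, 0, 0, 0, 1]

/-- The set { [[S,0],[0,qI₃]] : S symmetric 2×2, tr S + 3q = 0 }. -/
def blockSet13 : Set (Matrix (Fin 5) (Fin 5) ℂ) :=
  {Y | ∃ s₀₀ s₀₁ s₁₁ q : ℂ, s₀₀ + s₁₁ + 3 * q = 0 ∧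
    Y = !![s₀₀, s₀₁, 0, 0, 0;
           s₀₁, s₁₁, 0, 0, 0;
           0, 0, q, 0, 0;
           0, 0, 0, q, 0;
           0, 0, 0, 0, q]}

/-- [[0,1],[1,0]] ⊕ 0₃. -/
def E13 : Matrix (Fin 5) (Fin 5) ℂ :=
  !![0, 1, 0, 0, 0;
     1, 0, 0, 0, 0;
     0, 0, 0, 0, 0;
     0, 0, 0, 0, 0;
     0, 0, 0, 0, 0]

def F13 : Matrix (Fin 5) (Fin 5) ℂ := Matrix.diagonal ![3, 3, -2, -2, -2]

/-! ### Auxiliary definitions and lemmas -/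

def G1 : Matrix (Fin 5) (Fin 5) ℂ :=
  !![3,0,0,0,0;0,0,0,0,0;0,0,-1,0,0;0,0,0,-1,0;0,0,0,0,-1]
def G2 : Matrix (Fin 5) (Fin 5) ℂ :=
  !![0,0,0,0,0;0,3,0,0,0;0,0,-1,0,0;0,0,0,-1,0;0,0,0,0,-1]

def Bm1 : Matrix (Fin 3) (Fin 3) ℝ := !![1,0,0;0,-1,0;0,0,-1]
def Bm2 : Matrix (Fin 3) (Fin 3) ℝ := !![-1,0,0;0,1,0;0,0,-1]
def Bm3 : Matrix (Fin 3) (Fin 3) ℝ := !![-1,0,0;0,-1,0;0,0,1]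
def Bm4 : Matrix (Fin 3) (Fin 3) ℝ := !![0,0,1;1,0,0;0,1,0]

lemma Bm1_mem : Bm1 ∈ SO3 := by
  refine ⟨?_, by norm_num [Bm1, Matrix.det_fin_three, Matrix.cons_val_two, Matrix.cons_val_one, Matrix.cons_val_zero]⟩
  rw [show Bm1ᵀ = !![1,0,0;0,-1,0;0,0,-1] from by ext i j; fin_cases i <;> fin_cases j <;> rfl]
  norm_num [Bm1, Matrix.mul_fin_three]; exact Matrix.one_fin_three.symm
lemma Bm2_mem : Bm2 ∈ SO3 := by
  refine ⟨?_, by norm_num [Bm2, Matrix.det_fin_three, Matrix.cons_val_two, Matrix.cons_val_one, Matrix.cons_val_zero]⟩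
  rw [show Bm2ᵀ = !![-1,0,0;0,1,0;0,0,-1] from by ext i j; fin_cases i <;> fin_cases j <;> rfl]
  norm_num [Bm2, Matrix.mul_fin_three]; exact Matrix.one_fin_three.symm
lemma Bm3_mem : Bm3 ∈ SO3 := by
  refine ⟨?_, by norm_num [Bm3, Matrix.det_fin_three, Matrix.cons_val_two, Matrix.cons_val_one, Matrix.cons_val_zero]⟩
  rw [show Bm3ᵀ = !![-1,0,0;0,-1,0;0,0,1] from by ext i j; fin_cases i <;> fin_cases j <;> rfl]
  norm_num [Bm3, Matrix.mul_fin_three]; exact Matrix.one_fin_three.symm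
lemma Bm4_mem : Bm4 ∈ SO3 := by
  refine ⟨?_, by norm_num [Bm4, Matrix.det_fin_three, Matrix.cons_val_two, Matrix.cons_val_one, Matrix.cons_val_zero]⟩
  rw [show Bm4ᵀ = !![0,1,0;0,0,1;1,0,0] from by ext i j; fin_cases i <;> fin_cases j <;> rfl]
  norm_num [Bm4, Matrix.mul_fin_three]; exact Matrix.one_fin_three.symm

lemma embB_orth (B : Matrix (Fin 3) (Fin 3) ℝ)
    (hB' : ∀ i j : Fin 3, (B i 0 : ℂ) * B j 0 + B i 1 * B j 1 + B i 2 * B j 2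
      = if i = j then 1 else 0) :
    embB B * (embB B)ᵀ = 1 := by
  ext i j
  rw [Matrix.mul_apply]
  simp only [Fin.sum_univ_five, Matrix.transpose_apply]
  fin_cases i <;> fin_cases j <;>
    simp [embB, Matrix.one_apply, Matrix.vecHead, Matrix.vecTail] <;>
    exact (hB' _ _).trans (by simp)

lemma embB_mul_W (B : Matrix (Fin 3) (Fin 3) ℝ) (a b c : ℂ) :
    embB B * !![a,b,0,0,0; b,c,0,0,0; 0,0,0,0,0; 0,0,0,0,0; 0,0,0,0,0]
      = -(!![a,b,0,0,0; b,c,0,0,0; 0,0,0,0,0; 0,0,0,0,0; 0,0,0,0,0]) := by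
  ext i j
  rw [Matrix.mul_apply]
  simp only [Fin.sum_univ_five]
  fin_cases i <;> fin_cases j <;>
    simp [embB, Matrix.vecHead, Matrix.vecTail]

lemma W_mul_embBT (B : Matrix (Fin 3) (Fin 3) ℝ) (a b c : ℂ) :
    !![a,b,0,0,0; b,c,0,0,0; 0,0,0,0,0; 0,0,0,0,0; 0,0,0,0,0] * (embB B)ᵀ
      = -(!![a,b,0,0,0; b,c,0,0,0; 0,0,0,0,0; 0,0,0,0,0; 0,0,0,0,0]) := by
  ext i j
  rw [Matrix.mul_apply]
  simp only [Fin.sum_univ_five, Matrix.transpose_apply]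
  fin_cases i <;> fin_cases j <;>
    simp [embB, Matrix.vecHead, Matrix.vecTail]

lemma block_fixed (B : Matrix (Fin 3) (Fin 3) ℝ) (hB : B * Bᵀ = 1)
    (s₀₀ s₀₁ s₁₁ q : ℂ) :
    embB B * !![s₀₀, s₀₁, 0, 0, 0; s₀₁, s₁₁, 0, 0, 0; 0, 0, q, 0, 0; 0, 0, 0, q, 0; 0, 0, 0, 0, q]
      * (embB B)ᵀ
    = !![s₀₀, s₀₁, 0, 0, 0; s₀₁, s₁₁, 0, 0, 0; 0, 0, q, 0, 0; 0, 0, 0, q, 0; 0, 0, 0, 0, q] := by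
  have hB' : ∀ i j : Fin 3, (B i 0 : ℂ) * B j 0 + B i 1 * B j 1 + B i 2 * B j 2
      = if i = j then 1 else 0 := by
    intro i j
    have h := congrFun (congrFun hB i) j
    simp [Matrix.mul_apply, Matrix.transpose_apply, Fin.sum_univ_three, Matrix.one_apply] at h
    split <;> rename_i hij
    · subst hij; simp at h; exact_mod_cast h
    · simp [hij] at h; exact_mod_cast h
  have hY : !![s₀₀, s₀₁, 0, 0, 0; s₀₁, s₁₁, 0, 0, 0; 0, 0, q, 0, 0; 0, 0, 0, q, 0; 0, 0, 0, 0, q]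
      = q • (1 : Matrix (Fin 5) (Fin 5) ℂ)
        + !![s₀₀ - q, s₀₁, 0,0,0; s₀₁, s₁₁ - q, 0,0,0; 0,0,0,0,0; 0,0,0,0,0; 0,0,0,0,0] := by
    ext i j
    fin_cases i <;> fin_cases j <;>
      simp [Matrix.one_apply, Matrix.vecHead, Matrix.vecTail]
  rw [hY, Matrix.mul_add, Matrix.add_mul, Matrix.mul_smul, Matrix.smul_mul, Matrix.mul_one,
    embB_orth B hB', embB_mul_W, Matrix.neg_mul, W_mul_embBT, neg_neg]

lemma blockT (s t u q : ℂ) :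
    (!![s, t, 0, 0, 0; t, u, 0, 0, 0; 0, 0, q, 0, 0; 0, 0, 0, q, 0; 0, 0, 0, 0, q])ᵀ
    = !![s, t, 0, 0, 0; t, u, 0, 0, 0; 0, 0, q, 0, 0; 0, 0, 0, q, 0; 0, 0, 0, 0, q] := by
  ext i j; fin_cases i <;> fin_cases j <;> rfl

lemma blockTr (s t u q : ℂ) :
    (!![s, t, 0, 0, 0; t, u, 0, 0, 0; 0, 0, q, 0, 0; 0, 0, 0, q, 0; 0, 0, 0, 0, q]).trace
    = s + u + 3 * q := by
  simp [Matrix.trace, Fin.sum_univ_five, Matrix.diag, Matrix.vecHead, Matrix.vecTail]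
  ring

lemma forward_i (X : Matrix (Fin 5) (Fin 5) ℂ) (hsym : Xᵀ = X) (htr : X.trace = 0)
    (hfix : ∀ B ∈ SO3, embB B * X * (embB B)ᵀ = X) : X ∈ blockSet13 := by
  have hs : ∀ i j, X i j = X j i := by
    intro i j; have := congrFun (congrFun hsym j) i; simpa using this
  have hX1 := hfix Bm1 Bm1_mem
  have hX2 := hfix Bm2 Bm2_mem
  have hX3 := hfix Bm3 Bm3_mem
  have hX4 := hfix Bm4 Bm4_mem
  rw [show (embB Bm1)ᵀ = !![-1,0,0,0,0;0,-1,0,0,0;0,0,1,0,0;0,0,0,-1,0;0,0,0,0,-1] from by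
      ext i j; fin_cases i <;> fin_cases j <;> norm_num [embB, Bm1, Matrix.transpose_apply, Matrix.vecHead, Matrix.vecTail, Matrix.cons_val_two, Matrix.cons_val_one, Matrix.cons_val_zero],
    show embB Bm1 = !![-1,0,0,0,0;0,-1,0,0,0;0,0,1,0,0;0,0,0,-1,0;0,0,0,0,-1] from by
      ext i j; fin_cases i <;> fin_cases j <;> norm_num [embB, Bm1, Matrix.vecHead, Matrix.vecTail, Matrix.cons_val_two, Matrix.cons_val_one, Matrix.cons_val_zero]] at hX1
  rw [show (embB Bm2)ᵀ = !![-1,0,0,0,0;0,-1,0,0,0;0,0,-1,0,0;0,0,0,1,0;0,0,0,0,-1] from by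
      ext i j; fin_cases i <;> fin_cases j <;> norm_num [embB, Bm2, Matrix.transpose_apply, Matrix.vecHead, Matrix.vecTail, Matrix.cons_val_two, Matrix.cons_val_one, Matrix.cons_val_zero],
    show embB Bm2 = !![-1,0,0,0,0;0,-1,0,0,0;0,0,-1,0,0;0,0,0,1,0;0,0,0,0,-1] from by
      ext i j; fin_cases i <;> fin_cases j <;> norm_num [embB, Bm2, Matrix.vecHead, Matrix.vecTail, Matrix.cons_val_two, Matrix.cons_val_one, Matrix.cons_val_zero]] at hX2
  rw [show (embB Bm3)ᵀ = !![-1,0,0,0,0;0,-1,0,0,0;0,0,-1,0,0;0,0,0,-1,0;0,0,0,0,1] from by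
      ext i j; fin_cases i <;> fin_cases j <;> norm_num [embB, Bm3, Matrix.transpose_apply, Matrix.vecHead, Matrix.vecTail, Matrix.cons_val_two, Matrix.cons_val_one, Matrix.cons_val_zero],
    show embB Bm3 = !![-1,0,0,0,0;0,-1,0,0,0;0,0,-1,0,0;0,0,0,-1,0;0,0,0,0,1] from by
      ext i j; fin_cases i <;> fin_cases j <;> norm_num [embB, Bm3, Matrix.vecHead, Matrix.vecTail, Matrix.cons_val_two, Matrix.cons_val_one, Matrix.cons_val_zero]] at hX3
  rw [show (embB Bm4)ᵀ = !![-1,0,0,0,0;0,-1,0,0,0;0,0,0,1,0;0,0,0,0,1;0,0,1,0,0] from by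
      ext i j; fin_cases i <;> fin_cases j <;> norm_num [embB, Bm4, Matrix.transpose_apply, Matrix.vecHead, Matrix.vecTail, Matrix.cons_val_two, Matrix.cons_val_one, Matrix.cons_val_zero],
    show embB Bm4 = !![-1,0,0,0,0;0,-1,0,0,0;0,0,0,0,1;0,0,1,0,0;0,0,0,1,0] from by
      ext i j; fin_cases i <;> fin_cases j <;> norm_num [embB, Bm4, Matrix.vecHead, Matrix.vecTail, Matrix.cons_val_two, Matrix.cons_val_one, Matrix.cons_val_zero]] at hX4
  have ext1 : ∀ (i j : Fin 5), X i j = 0 → X j i = 0 := by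
    intro i j h; rw [hs j i]; exact h
  have z02 : X 0 2 = 0 := by
    have h := congrFun (congrFun hX1 0) 2
    simp [Matrix.mul_apply, Matrix.vecMul, dotProduct, Fin.sum_univ_five, Matrix.vecHead, Matrix.vecTail] at h
    first | exact h | linear_combination -h/2 | linear_combination h/2 | linear_combination h
  have z12 : X 1 2 = 0 := by
    have h := congrFun (congrFun hX1 1) 2
    simp [Matrix.mul_apply, Matrix.vecMul, dotProduct, Fin.sum_univ_five, Matrix.vecHead, Matrix.vecTail] at h
    first | exact h | linear_combination -h/2 | linear_combination h/2 | linear_combination h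
  have z23 : X 2 3 = 0 := by
    have h := congrFun (congrFun hX1 2) 3
    simp [Matrix.mul_apply, Matrix.vecMul, dotProduct, Fin.sum_univ_five, Matrix.vecHead, Matrix.vecTail] at h
    first | exact h | linear_combination -h/2 | linear_combination h/2 | linear_combination h
  have z24 : X 2 4 = 0 := by
    have h := congrFun (congrFun hX1 2) 4
    simp [Matrix.mul_apply, Matrix.vecMul, dotProduct, Fin.sum_univ_five, Matrix.vecHead, Matrix.vecTail] at h
    first | exact h | linear_combination -h/2 | linear_combination h/2 | linear_combination h
  have z03 : X 0 3 = 0 := by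
    have h := congrFun (congrFun hX2 0) 3
    simp [Matrix.mul_apply, Matrix.vecMul, dotProduct, Fin.sum_univ_five, Matrix.vecHead, Matrix.vecTail] at h
    first | exact h | linear_combination -h/2 | linear_combination h/2 | linear_combination h
  have z13 : X 1 3 = 0 := by
    have h := congrFun (congrFun hX2 1) 3
    simp [Matrix.mul_apply, Matrix.vecMul, dotProduct, Fin.sum_univ_five, Matrix.vecHead, Matrix.vecTail] at h
    first | exact h | linear_combination -h/2 | linear_combination h/2 | linear_combination h
  have z34 : X 3 4 = 0 := by
    have h := congrFun (congrFun hX2 3) 4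
    simp [Matrix.mul_apply, Matrix.vecMul, dotProduct, Fin.sum_univ_five, Matrix.vecHead, Matrix.vecTail] at h
    first | exact h | linear_combination -h/2 | linear_combination h/2 | linear_combination h
  have z04 : X 0 4 = 0 := by
    have h := congrFun (congrFun hX3 0) 4
    simp [Matrix.mul_apply, Matrix.vecMul, dotProduct, Fin.sum_univ_five, Matrix.vecHead, Matrix.vecTail] at h
    first | exact h | linear_combination -h/2 | linear_combination h/2 | linear_combination h
  have z14 : X 1 4 = 0 := by
    have h := congrFun (congrFun hX3 1) 4
    simp [Matrix.mul_apply, Matrix.vecMul, dotProduct, Fin.sum_univ_five, Matrix.vecHead, Matrix.vecTail] at h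
    first | exact h | linear_combination -h/2 | linear_combination h/2 | linear_combination h
  have h44 : X 4 4 = X 2 2 := by
    have h := congrFun (congrFun hX4 2) 2
    simp [Matrix.mul_apply, Matrix.vecMul, dotProduct, Fin.sum_univ_five, Matrix.vecHead, Matrix.vecTail] at h
    first | exact h | linear_combination -h | linear_combination h
  have h33 : X 3 3 = X 2 2 := by
    have h := congrFun (congrFun hX4 3) 3
    simp [Matrix.mul_apply, Matrix.vecMul, dotProduct, Fin.sum_univ_five, Matrix.vecHead, Matrix.vecTail] at h
    first | exact h | linear_combination -h | linear_combination h
  refine ⟨X 0 0, X 0 1, X 1 1, X 2 2, ?_, ?_⟩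
  · have ht : X 0 0 + X 1 1 + X 2 2 + X 3 3 + X 4 4 = 0 := by
      simpa [Matrix.trace, Fin.sum_univ_five, Matrix.diag] using htr
    linear_combination ht - h33 - h44
  · ext i j
    fin_cases i <;> fin_cases j <;>
      simp [Matrix.vecHead, Matrix.vecTail, z02, z12, z23, z24, z03, z13, z34, z04, z14,
        h33, h44, ext1 _ _ z02, ext1 _ _ z12, ext1 _ _ z23, ext1 _ _ z24, ext1 _ _ z03,
        ext1 _ _ z13, ext1 _ _ z34, ext1 _ _ z04, ext1 _ _ z14, hs 1 0]

lemma h13T : h13ᵀ = h13 := by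
  ext i j; fin_cases i <;> fin_cases j <;> rfl

lemma h13_block (s t q : ℂ) :
    h13 * !![s, t, 0, 0, 0; t, s, 0, 0, 0; 0, 0, q, 0, 0; 0, 0, 0, q, 0; 0, 0, 0, 0, q] * h13
    = !![s, t, 0, 0, 0; t, s, 0, 0, 0; 0, 0, q, 0, 0; 0, 0, 0, q, 0; 0, 0, 0, 0, q] := by
  ext i j
  rw [Matrix.mul_apply]
  simp only [Fin.sum_univ_five]
  fin_cases i <;> fin_cases j <;>
    simp [h13, Matrix.mul_apply, Fin.sum_univ_five, Matrix.vecHead, Matrix.vecTail]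

lemma pair_rep (a b : ℂ) :
    a • E13 + b • F13
    = !![3*b, a, 0, 0, 0; a, 3*b, 0, 0, 0; 0, 0, -2*b, 0, 0; 0, 0, 0, -2*b, 0; 0, 0, 0, 0, -2*b] := by
  ext i j
  fin_cases i <;> fin_cases j <;>
    simp [E13, F13, Matrix.diagonal, Matrix.vecHead, Matrix.vecTail] <;> ring

lemma block_decomp (s0 s1 s2 q : ℂ) (ht : s0 + s2 + 3 * q = 0) :
    !![s0, s1, 0, 0, 0; s1, s2, 0, 0, 0; 0, 0, q, 0, 0; 0, 0, 0, q, 0; 0, 0, 0, 0, q]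
    = (s0/3) • G1 + (s2/3) • G2 + s1 • E13 := by
  ext i j
  fin_cases i <;> fin_cases j <;>
    simp [G1, G2, E13, Matrix.vecHead, Matrix.vecTail] <;>
    first | ring1 | linear_combination ht/3 | linear_combination -ht/3

lemma li2 : LinearIndependent ℂ ![E13, F13] := by
  rw [Fintype.linearIndependent_iff]
  intro g hg
  rw [Fin.sum_univ_two] at hg
  have h01 := congrFun (congrFun hg 0) 1
  have h00 := congrFun (congrFun hg 0) 0
  simp [E13, F13, Matrix.diagonal, Matrix.vecHead, Matrix.vecTail] at h01 h00
  intro i; fin_cases i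
  · exact h01
  · simpa using h00

lemma li3 : LinearIndependent ℂ ![G1, G2, E13] := by
  rw [Fintype.linearIndependent_iff]
  intro g hg
  rw [Fin.sum_univ_three] at hg
  have h00 := congrFun (congrFun hg 0) 0
  have h11 := congrFun (congrFun hg 1) 1
  have h01 := congrFun (congrFun hg 0) 1
  simp [G1, G2, E13, Matrix.vecHead, Matrix.vecTail] at h00 h11 h01
  intro i; fin_cases i
  · simpa using h00
  · simpa using h11
  · exact h01

lemma rank2 : Module.finrank ℂ ↥(Submodule.span ℂ {E13, F13}) = 2 := by
  have hr : Set.range ![E13, F13] = {E13, F13} := by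
    ext x; simp [Fin.exists_fin_two, or_comm]
  rw [← hr, finrank_span_eq_card li2]
  rfl

lemma rank3 : Module.finrank ℂ ↥(Submodule.span ℂ blockSet13) = 3 := by
  have hsp : Submodule.span ℂ blockSet13 = Submodule.span ℂ (Set.range ![G1, G2, E13]) := by
    apply le_antisymm
    · rw [Submodule.span_le]
      rintro Y ⟨s0, s1, s2, q, ht, rfl⟩
      rw [block_decomp s0 s1 s2 q ht]
      exact Submodule.add_mem _ (Submodule.add_mem _
        (Submodule.smul_mem _ _ (Submodule.subset_span ⟨0, rfl⟩))
        (Submodule.smul_mem _ _ (Submodule.subset_span ⟨1, rfl⟩)))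
        (Submodule.smul_mem _ _ (Submodule.subset_span ⟨2, rfl⟩))
    · rw [Submodule.span_le]
      rintro Y ⟨i, rfl⟩
      apply Submodule.subset_span
      fin_cases i
      · exact ⟨3, 0, 0, -1, by ring, rfl⟩
      · exact ⟨0, 0, 3, -1, by ring, rfl⟩
      · exact ⟨0, 1, 0, 0, by ring, rfl⟩
  rw [hsp, finrank_span_eq_card li3]
  rfl

lemma forward_ii (X : Matrix (Fin 5) (Fin 5) ℂ) (hsym : Xᵀ = X) (htr : X.trace = 0)
    (hfix : ∀ B ∈ SO3, embB B * X * (embB B)ᵀ = X) (hh : h13 * X * h13ᵀ = X) :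
    X ∈ Submodule.span ℂ ({E13, F13} : Set (Matrix (Fin 5) (Fin 5) ℂ)) := by
  obtain ⟨s0, s1, s2, q, ht, hY⟩ := forward_i X hsym htr hfix
  rw [h13T] at hh
  have e : s2 = s0 := by
    have h := congrFun (congrFun hh 0) 0
    rw [hY] at h
    simp [h13, Matrix.mul_apply, Matrix.vecMul, dotProduct, Fin.sum_univ_five,
      Matrix.vecHead, Matrix.vecTail] at h
    first | exact h | exact h.symm | linear_combination h | linear_combination -h
  have hXrep : X = s1 • E13 + (s0/3) • F13 := by
    rw [pair_rep, hY]
    ext i j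
    fin_cases i <;> fin_cases j <;>
      simp [Matrix.vecHead, Matrix.vecTail] <;>
      first | ring1 | linear_combination e | linear_combination -e | linear_combination ht/3 + 2*e/3 | linear_combination ht/3 - e/3 | linear_combination -ht/3 + e/3
  rw [hXrep]
  exact Submodule.add_mem _
    (Submodule.smul_mem _ _ (Submodule.subset_span (Set.mem_insert _ _)))
    (Submodule.smul_mem _ _ (Submodule.subset_span (Set.mem_insert_of_mem _ rfl)))

theorem statement13 :
    ({X : Matrix (Fin 5) (Fin 5) ℂ | Xᵀ = X ∧ X.trace = 0 ∧
        ∀ B ∈ SO3, embB B * X * (embB B)ᵀ = X}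
      = blockSet13) ∧
    Module.finrank ℂ ↥(Submodule.span ℂ blockSet13) = 3 ∧
    ({X : Matrix (Fin 5) (Fin 5) ℂ | Xᵀ = X ∧ X.trace = 0 ∧
        (∀ B ∈ SO3, embB B * X * (embB B)ᵀ = X) ∧ h13 * X * h13ᵀ = X}
      = ↑(Submodule.span ℂ {E13, F13})) ∧
    Module.finrank ℂ ↥(Submodule.span ℂ {E13, F13}) = 2 := by
  refine ⟨?_, rank3, ?_, rank2⟩
  · ext X
    simp only [Set.mem_setOf_eq]
    constructor
    · rintro ⟨h1, h2, h3⟩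
      exact forward_i X h1 h2 h3
    · rintro ⟨s0, s1, s2, q, ht, rfl⟩
      refine ⟨blockT _ _ _ _, ?_, fun B hB => block_fixed B hB.1 _ _ _ _⟩
      rw [blockTr]; exact ht
  · ext X
    simp only [Set.mem_setOf_eq, SetLike.mem_coe]
    constructor
    · rintro ⟨h1, h2, h3, h4⟩
      exact forward_ii X h1 h2 h3 h4
    · intro hx
      rw [Submodule.mem_span_pair] at hx
      obtain ⟨a, b, rfl⟩ := hx
      rw [pair_rep]
      refine ⟨blockT _ _ _ _, ?_, fun B hB => block_fixed B hB.1 _ _ _ _, ?_⟩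
      · rw [blockTr]; ring
      · rw [h13T]; exact h13_block _ _ _

end
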